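/- Let r be a positive integer, let ζ_r be a primitive r-th root of unity, and let O_r := Z[ζ_r] be the ring of integers of the r-th cyclotomic field Q(ζ_r). Then the element Ψ_r(ζ_r) generates the same ideal of O_r as the product ∏_{ℓ} (ζ_r^{r/ℓ} − 1), where ℓ runs over the primes dividing r (note that each ζ_r^{r/ℓ} is a primitive ℓ-th root of unity). -/

import Mathlib

open Polynomial

noncomputable section

/-- `Ψ_r(X) := (X^r − 1)/Φ_r(X) ∈ ℤ[X]`. -/
def PsiPoly (r : ℕ) : ℤ[X] := (X ^ r - 1) /ₘ cyclotomic r ℤ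

theorem PsiPoly_eq_prod {r : ℕ} (hr : 0 < r) :
    PsiPoly r = ∏ d ∈ r.properDivisors, cyclotomic d ℤ := by
  have h := prod_cyclotomic_eq_X_pow_sub_one hr ℤ
  rw [← Nat.insert_self_properDivisors hr.ne',
    Finset.prod_insert Nat.self_notMem_properDivisors] at h
  rw [PsiPoly, ← h, mul_divByMonic_cancel_left _ (cyclotomic.monic r ℤ)]

/-- Let `ζ` be a primitive `r`-th root of unity (in a field of
characteristic zero) and let `O_r := ℤ[ζ]` be the ring of integers of the
`r`-th cyclotomic field, i.e. the subring generated by `ζ`.  Then `Ψ_r(ζ)`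
generates the same ideal of `O_r` as `∏_{ℓ prime, ℓ ∣ r} (ζ^{r/ℓ} − 1)`. -/
theorem stmt_7 (r : ℕ) (hr : 0 < r) (K : Type*) [Field K] [CharZero K]
    (ζ : K) (hζ : IsPrimitiveRoot ζ r) :
    let O := Algebra.adjoin ℤ ({ζ} : Set K)
    let z : O := ⟨ζ, Algebra.subset_adjoin rfl⟩
    (Ideal.span {Polynomial.aeval z (PsiPoly r)} : Ideal O) =
      Ideal.span {∏ ℓ ∈ r.primeFactors, (z ^ (r / ℓ) - 1)} := by
  intro O z
  classical
  set c : ℕ → O := fun d => aeval z (cyclotomic d ℤ) with hc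
  -- product of cyclotomic values
  have key : ∀ n : ℕ, 0 < n → ∏ d ∈ n.divisors, c d = z ^ n - 1 := by
    intro n hn
    have h := prod_cyclotomic_eq_X_pow_sub_one hn ℤ
    calc ∏ d ∈ n.divisors, c d = aeval z (∏ d ∈ n.divisors, cyclotomic d ℤ) := by
          simp [hc]
      _ = aeval z ((X : ℤ[X]) ^ n - 1) := by rw [h]
      _ = z ^ n - 1 := by simp
  -- unit criterion
  have unit1 : ∀ m : ℕ, m ∣ r → 1 < m → ¬ IsPrimePow m → IsUnit ((z : O) ^ (r / m) - 1) := by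
    intro m hm h1 hpp
    have hmpos : 0 < m := by omega
    have hprim : IsPrimitiveRoot (ζ ^ (r / m)) m :=
      hζ.pow hr (Nat.div_mul_cancel hm).symm
    have hroot : aeval ((z : O) ^ (r / m)) (cyclotomic m ℤ) = 0 := by
      have hcomm := aeval_algHom_apply O.val (z ^ (r / m)) (cyclotomic m ℤ)
      apply Subtype.coe_injective
      have h2 : (aeval ((O.val (z ^ (r / m)))) (cyclotomic m ℤ) : K) = 0 := by
        rw [aeval_def, eval₂_eq_eval_map, map_cyclotomic]
        exact hprim.isRoot_cyclotomic hmpos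
      calc ((aeval ((z : O) ^ (r / m)) (cyclotomic m ℤ) : O) : K)
          = O.val (aeval ((z : O) ^ (r / m)) (cyclotomic m ℤ)) := rfl
        _ = aeval (O.val (z ^ (r / m))) (cyclotomic m ℤ) := hcomm.symm
        _ = 0 := h2
    have heval1 : aeval (1 : O) (cyclotomic m ℤ) = 1 := by
      rw [aeval_def, eval₂_at_one]
      have h3 : eval 1 (cyclotomic m ℤ) = 1 := by
        apply eval_one_cyclotomic_not_prime_pow
        intro p hp k hk
        rcases Nat.eq_zero_or_pos k with rfl | hk0
        · simp at hk; omega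
        · exact hpp ⟨p, k, hp.prime, hk0, hk⟩
      rw [h3, map_one]
    have hdvd : ((z : O) ^ (r / m) - 1) ∣
        (aeval ((z : O) ^ (r / m)) (cyclotomic m ℤ) - aeval (1 : O) (cyclotomic m ℤ)) := by
      rw [aeval_def, eval₂_eq_eval_map, aeval_def, eval₂_eq_eval_map]
      exact sub_dvd_eval_sub _ _ _
    rw [hroot, heval1, zero_sub] at hdvd
    exact isUnit_of_dvd_unit hdvd (IsUnit.neg isUnit_one)
  -- c d is a unit when r/d is not a prime power
  have unitC : ∀ d ∈ r.properDivisors, ¬ IsPrimePow (r / d) → IsUnit (c d) := by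
    intro d hd hpp
    obtain ⟨hdvd, hlt⟩ := Nat.mem_properDivisors.mp hd
    have hd0 : 0 < d := Nat.pos_of_dvd_of_pos hdvd hr
    have h1 : c d ∣ z ^ d - 1 := by
      rw [← key d hd0]
      exact Finset.dvd_prod_of_mem _ (Nat.mem_divisors_self d hd0.ne')
    have h2 : 1 < r / d := by
      have hne1 : r / d ≠ 1 := by
        intro h
        have : r = d * 1 := Nat.eq_mul_of_div_eq_right hdvd h
        omega
      have : 0 < r / d := Nat.div_pos (Nat.le_of_dvd hr hdvd) hd0
      omega
    have hrm : r / (r / d) = d := Nat.div_div_self hdvd hr.ne'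
    have hu := unit1 (r / d) (Nat.div_dvd_of_dvd hdvd) h2 hpp
    rw [hrm] at hu
    exact isUnit_of_dvd_unit h1 hu
  -- prime-power part bookkeeping
  set S : Finset ℕ := r.properDivisors.filter (fun d => IsPrimePow (r / d)) with hS
  set T : ℕ → Finset ℕ := fun p => (r / p).divisors.filter (fun d => IsPrimePow (r / d)) with hT
  -- divisors of r/p are proper divisors of r
  have hmemP : ∀ p ∈ r.primeFactors, ∀ d ∈ (r / p).divisors, d ∈ r.properDivisors := by
    intro p hp d hd
    obtain ⟨hp1, hp2, _⟩ := Nat.mem_primeFactors.mp hp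
    obtain ⟨hddvd, hrp0⟩ := Nat.mem_divisors.mp hd
    refine Nat.mem_properDivisors.mpr ⟨hddvd.trans (Nat.div_dvd_of_dvd hp2), ?_⟩
    calc d ≤ r / p := Nat.le_of_dvd (Nat.pos_of_ne_zero hrp0) hddvd
      _ < r := Nat.div_lt_self hr hp1.one_lt
  have hTsub : ∀ p ∈ r.primeFactors, T p ⊆ S := by
    intro p hp d hd
    obtain ⟨hd1, hd2⟩ := Finset.mem_filter.mp hd
    exact Finset.mem_filter.mpr ⟨hmemP p hp d hd1, hd2⟩
  have hSsub : S ⊆ r.primeFactors.biUnion T := by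
    intro d hd
    obtain ⟨hd1, hpp⟩ := Finset.mem_filter.mp hd
    obtain ⟨hdvd, hlt⟩ := Nat.mem_properDivisors.mp hd1
    obtain ⟨p, k, hp, hk0, hpk⟩ := hpp
    have hpnat : p.Prime := Nat.prime_iff.mpr hp
    have hreq : r = d * p ^ k := by
      rw [hpk]; exact (Nat.mul_div_cancel' hdvd).symm
    have hpdvd : p ∣ r := by
      rw [hreq]; exact Dvd.dvd.mul_left (dvd_pow_self p hk0.ne') d
    refine Finset.mem_biUnion.mpr ⟨p, Nat.mem_primeFactors.mpr ⟨hpnat, hpdvd, hr.ne'⟩, ?_⟩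
    refine Finset.mem_filter.mpr ⟨Nat.mem_divisors.mpr ⟨?_, ?_⟩, ⟨p, k, hp, hk0, hpk⟩⟩
    · have h5 : r / p = d * p ^ (k - 1) := by
        rcases Nat.exists_eq_succ_of_ne_zero hk0.ne' with ⟨j, rfl⟩
        rw [hreq, pow_succ, ← mul_assoc]
        simp [Nat.mul_div_cancel _ hpnat.pos]
      rw [h5]; exact Dvd.intro _ rfl
    · exact (Nat.div_pos (Nat.le_of_dvd hr hpdvd) hpnat.pos).ne'
  have hbiU : r.primeFactors.biUnion T = S :=
    Finset.Subset.antisymm (Finset.biUnion_subset.mpr hTsub) hSsub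
  have hdisj : (↑r.primeFactors : Set ℕ).PairwiseDisjoint T := by
    intro p hp q hq hpq
    simp only [Function.onFun]
    rw [Finset.disjoint_left]
    intro e hep heq
    obtain ⟨hp1, hp2, _⟩ := Nat.mem_primeFactors.mp (by exact_mod_cast hp)
    obtain ⟨hq1, hq2, _⟩ := Nat.mem_primeFactors.mp (by exact_mod_cast hq)
    obtain ⟨he1, hpp⟩ := Finset.mem_filter.mp hep
    obtain ⟨he1', _⟩ := Finset.mem_filter.mp heq
    obtain ⟨hedvd, _⟩ := Nat.mem_divisors.mp he1
    obtain ⟨hedvd', _⟩ := Nat.mem_divisors.mp he1'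
    obtain ⟨p0, k, hp0, hk0, hpk⟩ := hpp
    have hp0nat : p0.Prime := Nat.prime_iff.mpr hp0
    have her : e ∣ r := hedvd.trans (Nat.div_dvd_of_dvd hp2)
    have hdvdre : ∀ s : ℕ, s ∣ r → e ∣ r / s → s ∣ r / e := by
      intro s hsr hes
      have h6 : e * s ∣ r := by
        have := mul_dvd_mul hes (dvd_refl s)
        rwa [Nat.div_mul_cancel hsr] at this
      obtain ⟨t, ht⟩ := h6
      have he0 : 0 < e := Nat.pos_of_dvd_of_pos her hr
      have : r / e = s * t := by
        rw [ht, mul_assoc, Nat.mul_div_cancel_left _ he0]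
      rw [this]; exact Dvd.intro t rfl
    have hpe : p ∣ r / e := hdvdre p hp2 hedvd
    have hqe : q ∣ r / e := hdvdre q hq2 hedvd'
    rw [← hpk] at hpe hqe
    have hpp0 : p = p0 :=
      (Nat.prime_dvd_prime_iff_eq hp1 hp0nat).mp (hp1.dvd_of_dvd_pow hpe)
    have hqp0 : q = p0 :=
      (Nat.prime_dvd_prime_iff_eq hq1 hp0nat).mp (hq1.dvd_of_dvd_pow hqe)
    exact hpq (hpp0.trans hqp0.symm)
  -- LHS decomposition
  have hLHS : aeval z (PsiPoly r) =
      (∏ d ∈ S, c d) *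
        ∏ d ∈ r.properDivisors.filter (fun d => ¬ IsPrimePow (r / d)), c d := by
    rw [PsiPoly_eq_prod hr, map_prod,
      ← Finset.prod_filter_mul_prod_filter_not r.properDivisors (fun d => IsPrimePow (r / d))]
  have hu1 : IsUnit (∏ d ∈ r.properDivisors.filter (fun d => ¬ IsPrimePow (r / d)), c d) := by
    refine Finset.prod_induction _ IsUnit (fun _ _ => IsUnit.mul) isUnit_one ?_
    intro d hd
    obtain ⟨hd1, hd2⟩ := Finset.mem_filter.mp hd
    exact unitC d hd1 hd2
  -- RHS decomposition
  have hRHS : (∏ p ∈ r.primeFactors, ((z : O) ^ (r / p) - 1)) =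
      (∏ d ∈ S, c d) *
        ∏ p ∈ r.primeFactors,
          ∏ d ∈ (r / p).divisors.filter (fun d => ¬ IsPrimePow (r / d)), c d := by
    have h1 : ∀ p ∈ r.primeFactors, ((z : O) ^ (r / p) - 1) =
        (∏ d ∈ T p, c d) *
          ∏ d ∈ (r / p).divisors.filter (fun d => ¬ IsPrimePow (r / d)), c d := by
      intro p hp
      obtain ⟨hp1, hp2, _⟩ := Nat.mem_primeFactors.mp hp
      rw [← key (r / p) (Nat.div_pos (Nat.le_of_dvd hr hp2) hp1.pos),
        ← Finset.prod_filter_mul_prod_filter_not (r / p).divisors (fun d => IsPrimePow (r / d))]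
    rw [Finset.prod_congr rfl h1, Finset.prod_mul_distrib, ← Finset.prod_biUnion hdisj, hbiU]
  have hu2 : IsUnit (∏ p ∈ r.primeFactors,
      ∏ d ∈ (r / p).divisors.filter (fun d => ¬ IsPrimePow (r / d)), c d) := by
    refine Finset.prod_induction _ IsUnit (fun _ _ => IsUnit.mul) isUnit_one ?_
    intro p hp
    refine Finset.prod_induction _ IsUnit (fun _ _ => IsUnit.mul) isUnit_one ?_
    intro d hd
    obtain ⟨hd1, hd2⟩ := Finset.mem_filter.mp hd
    exact unitC d (hmemP p hp d hd1) hd2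
  -- conclusion
  apply Ideal.span_singleton_eq_span_singleton.mpr
  have hassoc : Associated
      ((∏ d ∈ S, c d) *
        ∏ d ∈ r.properDivisors.filter (fun d => ¬ IsPrimePow (r / d)), c d)
      ((∏ d ∈ S, c d) *
        ∏ p ∈ r.primeFactors,
          ∏ d ∈ (r / p).divisors.filter (fun d => ¬ IsPrimePow (r / d)), c d) :=
    Associated.mul_left _
      ((associated_one_iff_isUnit.mpr hu1).trans (associated_one_iff_isUnit.mpr hu2).symm)
  rw [← hLHS, ← hRHS] at hassoc
  exact hassoc

end
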